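/- For the sequence y_0 = 1, y_{k+1} = y_k * exp(-sqrt(y_k)), the sequence is positive, strictly decreasing, converges to 0, and k^2 * y_k → 4 as k → ∞. -/

import Mathlib

open Filter

theorem stmt_15 (y : ℕ → ℝ)
    (h0 : y 0 = 1)
    (hrec : ∀ k, y (k + 1) = y k * Real.exp (-Real.sqrt (y k))) :
    (∀ k, 0 < y k) ∧ StrictAnti y ∧ Tendsto y atTop (nhds 0) ∧
      Tendsto (fun k : ℕ => (k : ℝ) ^ 2 * y k) atTop (nhds 4) := by
  have hpos : ∀ k, 0 < y k := by
    intro k; induction k with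
    | zero => rw [h0]; norm_num
    | succ n ih => rw [hrec]; positivity
  have hanti : StrictAnti y := by
    apply strictAnti_nat_of_succ_lt
    intro n
    rw [hrec]
    have h1 : Real.exp (-Real.sqrt (y n)) < 1 := by
      rw [Real.exp_lt_one_iff]
      simpa using Real.sqrt_pos.2 (hpos n)
    calc y n * Real.exp (-Real.sqrt (y n)) < y n * 1 :=
          mul_lt_mul_of_pos_left h1 (hpos n)
      _ = y n := mul_one _
  have hbdd : BddBelow (Set.range y) := ⟨0, by rintro _ ⟨k, rfl⟩; exact (hpos k).le⟩
  have htend : Tendsto y atTop (nhds (⨅ k, y k)) :=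
    tendsto_atTop_ciInf hanti.antitone hbdd
  set L := ⨅ k, y k with hLdef
  have hL0 : 0 ≤ L := le_ciInf fun k => (hpos k).le
  have htend2 : Tendsto (fun k => y (k + 1)) atTop (nhds L) :=
    htend.comp (tendsto_add_atTop_nat 1)
  have htend3 : Tendsto (fun k => y k * Real.exp (-Real.sqrt (y k))) atTop
      (nhds (L * Real.exp (-Real.sqrt L))) :=
    htend.mul (((Real.continuous_exp.comp
      (continuous_neg.comp Real.continuous_sqrt)).tendsto L).comp htend)
  have hLeq : L = L * Real.exp (-Real.sqrt L) := by
    apply tendsto_nhds_unique htend2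
    simpa only [hrec] using htend3
  have hLzero : L = 0 := by
    by_contra h
    have hLpos : 0 < L := lt_of_le_of_ne hL0 (Ne.symm h)
    have he : Real.exp (-Real.sqrt L) = 1 := by
      have := hLeq
      nlinarith [Real.exp_pos (-Real.sqrt L)]
    rw [Real.exp_eq_one_iff] at he
    have : Real.sqrt L = 0 := by linarith [neg_eq_zero.1 he]
    have := Real.sqrt_pos.2 hLpos
    linarith
  have htend0 : Tendsto y atTop (nhds 0) := hLzero ▸ htend
  -- define u
  set u : ℕ → ℝ := fun k => (Real.sqrt (y k))⁻¹ with hu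
  have hspos : ∀ k, 0 < Real.sqrt (y k) := fun k => Real.sqrt_pos.2 (hpos k)
  have hupos : ∀ k, 0 < u k := fun k => inv_pos.2 (hspos k)
  -- sqrt y → 0
  have hsq0 : Tendsto (fun k => Real.sqrt (y k)) atTop (nhds 0) := by
    have := (Real.continuous_sqrt.tendsto 0).comp htend0
    simpa [Function.comp_def] using this
  -- slope fact
  have hslope : Tendsto (fun x : ℝ => (Real.exp x - 1) / x) (nhdsWithin 0 {(0:ℝ)}ᶜ) (nhds 1) := by
    have h := hasDerivAt_iff_tendsto_slope.1 (Real.hasDerivAt_exp 0)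
    simp only [slope_fun_def, Real.exp_zero, sub_zero] at h
    exact h.congr fun x => by simp [smul_eq_mul, vsub_eq_sub, div_eq_inv_mul]
  -- t k = sqrt(y k)/2 tends to 0 within ≠ 0
  have ht : Tendsto (fun k => Real.sqrt (y k) / 2) atTop (nhdsWithin 0 {(0:ℝ)}ᶜ) := by
    rw [tendsto_nhdsWithin_iff]
    constructor
    · simpa using hsq0.div_const 2
    · exact Eventually.of_forall fun k => by
        have := hspos k; simp only [Set.mem_compl_iff, Set.mem_singleton_iff]; positivity
  -- d k := u (k+1) - u k
  have hd_eq : ∀ k, u (k + 1) - u k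
      = (1 / 2) * ((Real.exp (Real.sqrt (y k) / 2) - 1) / (Real.sqrt (y k) / 2)) := by
    intro k
    have hs := hspos k
    have hsqrec : Real.sqrt (y (k + 1))
        = Real.sqrt (y k) * Real.exp (-(Real.sqrt (y k) / 2)) := by
      rw [hrec, Real.sqrt_mul (hpos k).le, ← Real.exp_half, neg_div]
    simp only [hu, hsqrec]
    rw [mul_inv, ← Real.exp_neg]
    field_simp
  have hdtend : Tendsto (fun k => u (k + 1) - u k) atTop (nhds (1 / 2)) := by
    have h1 : Tendsto (fun k =>
        (Real.exp (Real.sqrt (y k) / 2) - 1) / (Real.sqrt (y k) / 2)) atTop (nhds 1) :=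
      hslope.comp ht
    have := h1.const_mul (1 / 2 : ℝ)
    simp only [mul_one] at this
    exact Tendsto.congr (fun k => (hd_eq k).symm) this
  -- Cesàro
  have hces := hdtend.cesaro
  have htele : ∀ n : ℕ, ∑ i ∈ Finset.range n, (u (i + 1) - u i) = u n - u 0 :=
    fun n => Finset.sum_range_sub u n
  have hun : Tendsto (fun n : ℕ => ((n : ℝ))⁻¹ * (u n - u 0)) atTop (nhds (1 / 2)) := by
    refine hces.congr fun n => ?_
    rw [htele]
  have hu0n : Tendsto (fun n : ℕ => ((n : ℝ))⁻¹ * u 0) atTop (nhds 0) := by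
    simpa using (tendsto_inv_atTop_nhds_zero_nat.mul_const (u 0))
  have hun' : Tendsto (fun n : ℕ => u n / (n : ℝ)) atTop (nhds (1 / 2)) := by
    have := hun.add hu0n
    simp only [add_zero] at this
    refine this.congr fun n => ?_
    field_simp
    ring
  -- n / u n → 2
  have hinv : Tendsto (fun n : ℕ => (n : ℝ) / u n) atTop (nhds 2) := by
    have h2 : Tendsto (fun n : ℕ => (u n / (n : ℝ))⁻¹) atTop (nhds ((1 / 2 : ℝ))⁻¹) :=
      hun'.inv₀ (by norm_num)
    norm_num at h2
    exact h2
  have hsqr : Tendsto (fun n : ℕ => ((n : ℝ) / u n) ^ 2) atTop (nhds (2 ^ 2)) :=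
    hinv.pow 2
  norm_num at hsqr
  refine ⟨hpos, hanti, htend0, hsqr.congr fun n => ?_⟩
  have : (n : ℝ) / u n = (n : ℝ) * Real.sqrt (y n) := by
    simp [hu, div_eq_mul_inv, inv_inv]
  rw [this, mul_pow, Real.sq_sqrt (hpos n).le]
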